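/- Let f : ℝ → ℝ be continuous with f(0) = 0, and suppose that for every ε > 0 there exists C_ε > 0 such that |f(s)| ≤ ε|s| + C_ε(e^{π s²} − 1) for all s ∈ ℝ. Let (uₙ) ⊂ L²(E) (E ⊂ ℝ measurable) be a bounded sequence in L²(E) such that the functions hₙ = e^{π uₙ²} − 1 are uniformly bounded in L^t(E) for some t > 1, and uₙ → 0 in L^{t'}(E) where 1/t + 1/t' = 1. Then ∫_E f(uₙ)·uₙ dx → 0 as n → ∞. -/

import Mathlib

open MeasureTheory Filter ENNReal

theorem stmt17 (E : Set ℝ) (hE : MeasurableSet E)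
    (f : ℝ → ℝ) (hf : Continuous f) (hf0 : f 0 = 0)
    (hgrowth : ∀ ε : ℝ, 0 < ε → ∃ Cε : ℝ, 0 < Cε ∧
      ∀ s : ℝ, |f s| ≤ ε * |s| + Cε * (Real.exp (Real.pi * s ^ 2) - 1))
    (u : ℕ → ℝ → ℝ)
    (hmeas : ∀ n, AEStronglyMeasurable (u n) (volume.restrict E))
    (M : ℝ≥0∞) (hM : M ≠ ⊤)
    (hL2 : ∀ n, eLpNorm (u n) 2 (volume.restrict E) ≤ M)
    (t t' : ℝ) (ht : 1 < t) (hconj : 1 / t + 1 / t' = 1)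
    (B : ℝ≥0∞) (hB : B ≠ ⊤)
    (hexp : ∀ n, eLpNorm (fun x => Real.exp (Real.pi * (u n x) ^ 2) - 1)
        (ENNReal.ofReal t) (volume.restrict E) ≤ B)
    (hconv : Tendsto (fun n => eLpNorm (u n) (ENNReal.ofReal t') (volume.restrict E))
        atTop (nhds 0)) :
    Tendsto (fun n => ∫ x in E, f (u n x) * u n x) atTop (nhds 0) := by
  set μ := volume.restrict E with hμdef
  have hexp1 : ∀ s : ℝ, 0 ≤ Real.exp (Real.pi * s ^ 2) - 1 := by
    intro s
    have h1 : (1 : ℝ) ≤ Real.exp (Real.pi * s ^ 2) := by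
      rw [← Real.exp_zero]
      exact Real.exp_le_exp.mpr (by positivity)
    linarith
  have htpos : 0 < t := lt_trans one_pos ht
  have ht1 : 1 / t < 1 := by rw [div_lt_one htpos]; exact ht
  have ht'pos : 0 < t' := by
    have h1 : 0 < 1 / t' := by linarith
    exact one_div_pos.mp h1
  have hconj' : t.HolderConjugate t' := Real.holderConjugate_iff.mpr ⟨ht, by rw [← one_div, ← one_div]; exact hconj⟩
  -- notation for the "exp - 1" functions
  set h : ℕ → ℝ → ℝ := fun n x => Real.exp (Real.pi * (u n x) ^ 2) - 1 with hhdef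
  have hum : ∀ n, AEMeasurable (u n) μ := fun n => (hmeas n).aemeasurable
  have hhm : ∀ n, AEMeasurable (fun x => ENNReal.ofReal (h n x)) μ := by
    intro n
    have hc : Continuous fun s : ℝ => ENNReal.ofReal (Real.exp (Real.pi * s ^ 2) - 1) := by
      exact ENNReal.continuous_ofReal.comp (by continuity)
    exact hc.measurable.comp_aemeasurable (hum n)
  -- rewrite eLpNorms as lintegrals
  have heqT : ∀ n, (∫⁻ x, ENNReal.ofReal (h n x) ^ t ∂μ) ^ (1 / t)
      = eLpNorm (h n) (ENNReal.ofReal t) μ := by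
    intro n
    rw [eLpNorm_eq_lintegral_rpow_enorm_toReal (by simpa [ENNReal.ofReal_eq_zero] using not_le.mpr htpos)
      ENNReal.ofReal_ne_top, ENNReal.toReal_ofReal htpos.le]
    congr 1
    refine lintegral_congr fun x => ?_
    rw [Real.enorm_eq_ofReal (hexp1 _)]
  have heqT' : ∀ n, (∫⁻ x, ((‖u n x‖₊ : ℝ≥0∞)) ^ t' ∂μ) ^ (1 / t')
      = eLpNorm (u n) (ENNReal.ofReal t') μ := by
    intro n
    rw [eLpNorm_eq_lintegral_rpow_enorm_toReal (by simpa [ENNReal.ofReal_eq_zero] using not_le.mpr ht'pos)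
      ENNReal.ofReal_ne_top, ENNReal.toReal_ofReal ht'pos.le]
    rfl
  -- L² bound as a lintegral bound
  have hL2' : ∀ n, (∫⁻ x, ((‖u n x‖₊ : ℝ≥0∞)) ^ (2 : ℝ) ∂μ) ≤ M ^ (2 : ℝ) := by
    intro n
    have h1 := hL2 n
    rw [eLpNorm_eq_lintegral_rpow_enorm_toReal (by norm_num) (by norm_num)] at h1
    simp only [ENNReal.toReal_ofNat] at h1
    have h2 := ENNReal.rpow_le_rpow h1 (by norm_num : (0:ℝ) ≤ 2)
    rw [← ENNReal.rpow_mul, show (1/2*2:ℝ) = 1 by norm_num, ENNReal.rpow_one] at h2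
    exact h2
  -- Hölder bound
  have hHolder : ∀ n, (∫⁻ x, ENNReal.ofReal (h n x) * (‖u n x‖₊ : ℝ≥0∞) ∂μ)
      ≤ B * eLpNorm (u n) (ENNReal.ofReal t') μ := by
    intro n
    have h1 := ENNReal.lintegral_mul_le_Lp_mul_Lq μ hconj' (hhm n) (hum n).nnnorm.coe_nnreal_ennreal
    simp only [Pi.mul_apply] at h1
    rw [heqT n, heqT' n] at h1
    exact h1.trans (mul_le_mul_left (hexp n) _)
  rw [NormedAddCommGroup.tendsto_nhds_zero]
  intro δ hδ
  have hMr : (0:ℝ) ≤ M.toReal := ENNReal.toReal_nonneg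
  set ε : ℝ := δ / (2 * (M.toReal ^ 2 + 1)) with hεdef
  have hε : 0 < ε := by positivity
  obtain ⟨C, hC, hCb⟩ := hgrowth ε hε
  -- the eventual bound
  set N : ℕ → ℝ≥0∞ := fun n => eLpNorm (u n) (ENNReal.ofReal t') μ with hNdef
  have key : ∀ n, N n ≠ ⊤ → ‖∫ x in E, f (u n x) * u n x‖ ≤
      (ENNReal.ofReal ε * M ^ (2:ℝ) + ENNReal.ofReal C * (B * N n)).toReal := by
    intro n hfin
    have hbound : (∫⁻ x, ENNReal.ofReal ‖f (u n x) * u n x‖ ∂μ)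
        ≤ ENNReal.ofReal ε * M ^ (2:ℝ) + ENNReal.ofReal C * (B * N n) := by
      have hpt : ∀ x, ENNReal.ofReal ‖f (u n x) * u n x‖ ≤
          ENNReal.ofReal ε * ((‖u n x‖₊ : ℝ≥0∞)) ^ (2:ℝ)
          + ENNReal.ofReal C * (ENNReal.ofReal (h n x) * (‖u n x‖₊ : ℝ≥0∞)) := by
        intro x
        set s : ℝ := u n x with hs
        have h1 : ‖f s * s‖ ≤ ε * |s| ^ 2 + C * (h n x * |s|) := by
          rw [norm_mul, Real.norm_eq_abs, Real.norm_eq_abs]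
          calc |f s| * |s| ≤ (ε * |s| + C * (Real.exp (Real.pi * s ^ 2) - 1)) * |s| :=
                mul_le_mul_of_nonneg_right (hCb s) (abs_nonneg s)
            _ = ε * |s| ^ 2 + C * ((Real.exp (Real.pi * s ^ 2) - 1) * |s|) := by ring
            _ = ε * |s| ^ 2 + C * (h n x * |s|) := by rw [hhdef]
        calc ENNReal.ofReal ‖f s * s‖ ≤ ENNReal.ofReal (ε * |s| ^ 2 + C * (h n x * |s|)) :=
              ENNReal.ofReal_le_ofReal h1
          _ = ENNReal.ofReal ε * ENNReal.ofReal (|s| ^ 2)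
              + ENNReal.ofReal C * (ENNReal.ofReal (h n x) * ENNReal.ofReal |s|) := by
              rw [ENNReal.ofReal_add (by positivity)
                  (mul_nonneg hC.le (mul_nonneg (hexp1 s) (abs_nonneg s))),
                ENNReal.ofReal_mul hε.le, ENNReal.ofReal_mul hC.le,
                ENNReal.ofReal_mul (hexp1 s)]
          _ = ENNReal.ofReal ε * ((‖s‖₊ : ℝ≥0∞)) ^ (2:ℝ)
              + ENNReal.ofReal C * (ENNReal.ofReal (h n x) * (‖s‖₊ : ℝ≥0∞)) := by
              rw [← enorm_eq_nnnorm, Real.enorm_eq_ofReal_abs,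
                ENNReal.ofReal_rpow_of_nonneg (abs_nonneg s) (by norm_num)]
              norm_num
      calc (∫⁻ x, ENNReal.ofReal ‖f (u n x) * u n x‖ ∂μ)
          ≤ ∫⁻ x, (ENNReal.ofReal ε * ((‖u n x‖₊ : ℝ≥0∞)) ^ (2:ℝ)
            + ENNReal.ofReal C * (ENNReal.ofReal (h n x) * (‖u n x‖₊ : ℝ≥0∞))) ∂μ :=
            lintegral_mono fun x => hpt x
        _ = ENNReal.ofReal ε * (∫⁻ x, ((‖u n x‖₊ : ℝ≥0∞)) ^ (2:ℝ) ∂μ)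
            + ENNReal.ofReal C * (∫⁻ x, ENNReal.ofReal (h n x) * (‖u n x‖₊ : ℝ≥0∞) ∂μ) := by
            rw [lintegral_add_right' _ (AEMeasurable.const_mul (show AEMeasurable (fun x => ENNReal.ofReal (h n x) * (‖u n x‖₊ : ℝ≥0∞)) μ from
              (hhm n).mul (hum n).nnnorm.coe_nnreal_ennreal) _),
              lintegral_const_mul' _ _ ENNReal.ofReal_ne_top,
              lintegral_const_mul' _ _ ENNReal.ofReal_ne_top]
        _ ≤ ENNReal.ofReal ε * M ^ (2:ℝ) + ENNReal.ofReal C * (B * N n) :=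
            add_le_add (mul_le_mul_right (hL2' n) _) (mul_le_mul_right (hHolder n) _)
    have hne : ENNReal.ofReal ε * M ^ (2:ℝ) + ENNReal.ofReal C * (B * N n) ≠ ⊤ := by
      apply ENNReal.add_ne_top.mpr
      constructor
      · exact ENNReal.mul_ne_top ENNReal.ofReal_ne_top
          (ENNReal.rpow_ne_top_of_nonneg (by norm_num) hM)
      · exact ENNReal.mul_ne_top ENNReal.ofReal_ne_top (ENNReal.mul_ne_top hB hfin)
    calc ‖∫ x in E, f (u n x) * u n x‖
        ≤ (∫⁻ x, ENNReal.ofReal ‖f (u n x) * u n x‖ ∂μ).toReal :=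
          norm_integral_le_lintegral_norm _
      _ ≤ _ := ENNReal.toReal_mono hne hbound
  -- limit of the right-hand side
  have hSne : ENNReal.ofReal ε * M ^ (2:ℝ) ≠ ⊤ :=
    ENNReal.mul_ne_top ENNReal.ofReal_ne_top (ENNReal.rpow_ne_top_of_nonneg (by norm_num) hM)
  have hlimN : Tendsto (fun n => ENNReal.ofReal C * (B * N n)) atTop (nhds 0) := by
    have h1 : Tendsto (fun n => B * N n) atTop (nhds (B * 0)) :=
      ENNReal.Tendsto.const_mul hconv (Or.inr hB)
    rw [mul_zero] at h1
    have h2 : Tendsto (fun n => ENNReal.ofReal C * (B * N n)) atTop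
        (nhds (ENNReal.ofReal C * 0)) :=
      ENNReal.Tendsto.const_mul h1 (Or.inr ENNReal.ofReal_ne_top)
    rwa [mul_zero] at h2
  have hlim : Tendsto (fun n => (ENNReal.ofReal ε * M ^ (2:ℝ)
      + ENNReal.ofReal C * (B * N n)).toReal) atTop
      (nhds ((ENNReal.ofReal ε * M ^ (2:ℝ)).toReal)) := by
    have h1 : Tendsto (fun n => ENNReal.ofReal ε * M ^ (2:ℝ)
        + ENNReal.ofReal C * (B * N n)) atTop
        (nhds (ENNReal.ofReal ε * M ^ (2:ℝ) + 0)) :=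
      Tendsto.add tendsto_const_nhds hlimN
    rw [add_zero] at h1
    exact (ENNReal.tendsto_toReal hSne).comp h1
  have hSlt : (ENNReal.ofReal ε * M ^ (2:ℝ)).toReal < δ := by
    rw [ENNReal.toReal_mul, ENNReal.toReal_ofReal hε.le, ← ENNReal.toReal_rpow]
    have hMr2 : M.toReal ^ (2:ℝ) = M.toReal ^ 2 := by
      rw [← Real.rpow_natCast M.toReal 2]; norm_num
    rw [hMr2, hεdef]
    rw [div_mul_eq_mul_div, div_lt_iff₀ (by positivity)]
    nlinarith [sq_nonneg M.toReal]
  have hevfin : ∀ᶠ n in atTop, N n ≠ ⊤ := by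
    filter_upwards [hconv.eventually_lt_const (by norm_num : (0:ℝ≥0∞) < 1)] with n hn
    exact hn.ne_top
  have hevlt : ∀ᶠ n in atTop, (ENNReal.ofReal ε * M ^ (2:ℝ)
      + ENNReal.ofReal C * (B * N n)).toReal < δ :=
    hlim.eventually_lt_const hSlt
  filter_upwards [hevfin, hevlt] with n h1 h2
  exact lt_of_le_of_lt (key n h1) h2
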